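/- Let η ∈ (0, 1/2] with x₂ := 1 - η + √(1 - 2η) < 1. Define f̄_η : (x₂, ∞) → ℝ by f̄_η(b) := (2 - η - b + √(b² + 2(η-1)b + η²))². Then f̄_η is monotonically non-decreasing on (x₂, ∞), and lim_{b→∞} f̄_η(b) = 1; hence f̄_η(b) ≤ 1 for all b ∈ (x₂, ∞). -/
import Mathlib


/-- For η ∈ (0,1/2] with x₂ := 1 - η + √(1-2η) < 1, the function
f̄_η(b) := (2 - η - b + √(b² + 2(η-1)b + η²))² is monotonically non-decreasing on (x₂, ∞),
tends to 1 as b → ∞, and hence f̄_η(b) ≤ 1 for all b > x₂. -/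
theorem stmt_5 (η : ℝ) (hη : 0 < η) (hη' : η ≤ 1/2)
    (x₂ : ℝ) (hx₂ : x₂ = 1 - η + Real.sqrt (1 - 2*η)) (hx₂' : x₂ < 1)
    (f : ℝ → ℝ)
    (hf : ∀ b : ℝ, f b = (2 - η - b + Real.sqrt (b^2 + 2*(η-1)*b + η^2))^2) :
    MonotoneOn f (Set.Ioi x₂) ∧
    Filter.Tendsto f Filter.atTop (nhds 1) ∧
    ∀ b ∈ Set.Ioi x₂, f b ≤ 1 := by
  have hc : (0:ℝ) ≤ 1 - 2*η := by linarith
  have hcsq : Real.sqrt (1-2*η) ^ 2 = 1 - 2*η := Real.sq_sqrt hc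
  have hcs0 : 0 ≤ Real.sqrt (1-2*η) := Real.sqrt_nonneg _
  have hcs1 : Real.sqrt (1-2*η) ≤ 1 := Real.sqrt_le_one.mpr (by linarith)
  have hcge : 1 - 2*η ≤ Real.sqrt (1-2*η) := by nlinarith
  set g : ℝ → ℝ := fun b => 2 - η - b + Real.sqrt (b^2 + 2*(η-1)*b + η^2) with hg
  -- per-point facts
  have hd : ∀ b > x₂, Real.sqrt (1-2*η) < b + η - 1 := by
    intro b hb; rw [hx₂] at hb; linarith
  have hdpos : ∀ b > x₂, 0 < b + η - 1 := fun b hb => lt_of_le_of_lt hcs0 (hd b hb)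
  have hargnn : ∀ b > x₂, 0 ≤ b^2 + 2*(η-1)*b + η^2 := by
    intro b hb
    have h1 := hd b hb
    nlinarith [hcsq, hcs0]
  have hs_sq : ∀ b > x₂, Real.sqrt (b^2 + 2*(η-1)*b + η^2) ^ 2 = b^2 + 2*(η-1)*b + η^2 :=
    fun b hb => Real.sq_sqrt (hargnn b hb)
  have hs_nn : ∀ b : ℝ, 0 ≤ Real.sqrt (b^2 + 2*(η-1)*b + η^2) := fun b => Real.sqrt_nonneg _
  have hsle : ∀ b > x₂, Real.sqrt (b^2 + 2*(η-1)*b + η^2) ≤ b + η - 1 := by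
    intro b hb
    have h1 : b^2 + 2*(η-1)*b + η^2 ≤ (b+η-1)^2 := by nlinarith
    calc Real.sqrt (b^2 + 2*(η-1)*b + η^2) ≤ Real.sqrt ((b+η-1)^2) := Real.sqrt_le_sqrt h1
      _ = b + η - 1 := by
          rw [Real.sqrt_sq (le_of_lt (hdpos b hb))]
  have hsge : ∀ b > x₂, b + η - 1 - (1-2*η)/(b+η-1) ≤ Real.sqrt (b^2 + 2*(η-1)*b + η^2) := by
    intro b hb
    have hdp := hdpos b hb
    have h1 : (b^2 + 2*(η-1)*b + η^2) ≤ Real.sqrt (b^2 + 2*(η-1)*b + η^2) * (b+η-1) := by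
      have := mul_le_mul_of_nonneg_left (hsle b hb) (hs_nn b)
      nlinarith [hs_sq b hb]
    have h2 : b + η - 1 - Real.sqrt (b^2 + 2*(η-1)*b + η^2) ≤ (1-2*η)/(b+η-1) := by
      rw [le_div_iff₀ hdp]
      nlinarith
    linarith
  have hgle1 : ∀ b > x₂, g b ≤ 1 := by
    intro b hb
    have := hsle b hb
    simp only [hg]; linarith
  have hglb : ∀ b > x₂, 1 - (1-2*η)/(b+η-1) ≤ g b := by
    intro b hb
    have := hsge b hb
    simp only [hg]; linarith
  have hgnn : ∀ b > x₂, 0 ≤ g b := by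
    intro b hb
    have h1 := hglb b hb
    have hdp := hdpos b hb
    have h2 : (1-2*η)/(b+η-1) ≤ 1 := by
      rw [div_le_one hdp]
      have := hd b hb
      linarith
    simp only [hg] at h1 ⊢
    linarith [h1, h2]
  have hmono : MonotoneOn f (Set.Ioi x₂) := by
    intro a ha b hb hab
    simp only [Set.mem_Ioi] at ha hb
    have key : Real.sqrt (a^2 + 2*(η-1)*a + η^2) + (b - a) ≤
        Real.sqrt (b^2 + 2*(η-1)*b + η^2) := by
      have hnn : 0 ≤ Real.sqrt (a^2 + 2*(η-1)*a + η^2) + (b - a) := by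
        have := hs_nn a; linarith
      have hsq : (Real.sqrt (a^2 + 2*(η-1)*a + η^2) + (b - a))^2 ≤
          b^2 + 2*(η-1)*b + η^2 := by
        have h1 := hs_sq a ha
        have h2 := hsle a ha
        nlinarith [mul_nonneg (sub_nonneg.mpr hab) (sub_nonneg.mpr h2)]
      calc Real.sqrt (a^2 + 2*(η-1)*a + η^2) + (b - a)
          = Real.sqrt ((Real.sqrt (a^2 + 2*(η-1)*a + η^2) + (b - a))^2) :=
            (Real.sqrt_sq hnn).symm
        _ ≤ Real.sqrt (b^2 + 2*(η-1)*b + η^2) := Real.sqrt_le_sqrt hsq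
    have hgab : g a ≤ g b := by simp only [hg]; linarith
    rw [hf a, hf b]
    have h0 := hgnn a ha
    have : (g a)^2 ≤ (g b)^2 := pow_le_pow_left₀ h0 hgab 2
    simpa [hg] using this
  have hbound : ∀ b ∈ Set.Ioi x₂, f b ≤ 1 := by
    intro b hb
    simp only [Set.mem_Ioi] at hb
    rw [hf b]
    have h0 := hgnn b hb
    have h1 := hgle1 b hb
    have : (g b)^2 ≤ 1 := by
      calc (g b)^2 ≤ 1^2 := pow_le_pow_left₀ h0 h1 2
        _ = 1 := one_pow 2
    simpa [hg] using this
  have hlim : Filter.Tendsto f Filter.atTop (nhds 1) := by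
    have hdt : Filter.Tendsto (fun b : ℝ => b + η - 1) Filter.atTop Filter.atTop := by
      have := Filter.tendsto_atTop_add_const_right Filter.atTop (η - 1)
        (Filter.tendsto_id (α := ℝ))
      exact this.congr (fun b => by simp only [id_eq]; ring)
    have hdiv : Filter.Tendsto (fun b : ℝ => (1-2*η)/(b+η-1)) Filter.atTop (nhds 0) :=
      Filter.Tendsto.div_atTop tendsto_const_nhds hdt
    have hlow : Filter.Tendsto (fun b : ℝ => 1 - (1-2*η)/(b+η-1)) Filter.atTop (nhds 1) := by
      have := (tendsto_const_nhds (x := (1:ℝ)) (f := Filter.atTop)).sub hdiv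
      simpa using this
    have hgt : Filter.Tendsto g Filter.atTop (nhds 1) := by
      apply tendsto_of_tendsto_of_tendsto_of_le_of_le' hlow tendsto_const_nhds
      · filter_upwards [Filter.eventually_gt_atTop x₂] with b hb
        exact hglb b hb
      · filter_upwards [Filter.eventually_gt_atTop x₂] with b hb
        exact hgle1 b hb
    have : Filter.Tendsto (fun b => (g b)^2) Filter.atTop (nhds 1) := by
      have := hgt.pow 2
      simpa using this
    exact this.congr (fun b => by rw [hf b])
  exact ⟨hmono, hlim, hbound⟩
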